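/- Consider a uniform instance in which W is an integral multiple of Max, say W = k·Max for some k ≥ 1. Then for every feasible allocation x there exists a feasible allocation y such that y i ∈ {0, Max} for every job i and ∑ i, y i ≥ ∑ i, x i. In particular, some maximum-profit feasible allocation assigns each job either 0 or Max units of the resource. -/

import Mathlib

open Finset

namespace FBAPaux
variable {n : ℕ}

/-- jobs covering time `t` -/
noncomputable def cov (s e : Fin n → ℝ) (t : ℝ) : Finset (Fin n) :=
  Finset.univ.filter (fun l => s l ≤ t ∧ t < e l)

noncomputable def load (s e : Fin n → ℝ) (x : Fin n → ℕ) (t : ℝ) : ℕ := ∑ l ∈ cov s e t, x l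

noncomputable def key (s : Fin n → ℝ) (i : Fin n) : ℝ ×ₗ Fin n := toLex (s i, i)

noncomputable def w (s : Fin n → ℝ) (i : Fin n) : ℕ :=
  (Finset.univ.filter (fun l => key s l < key s i)).card + 1

noncomputable def Φ (s : Fin n → ℝ) (x : Fin n → ℕ) : ℕ := ∑ l, x l * w s l

lemma key_le_imp {s : Fin n → ℝ} {i j : Fin n} (h : key s i ≤ key s j) : s i ≤ s j := by
  rcases (Prod.Lex.le_iff (x := key s i) (y := key s j)).1 h with h1 | h1
  · exact le_of_lt h1
  · exact le_of_eq h1.1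

lemma key_inj (s : Fin n → ℝ) : Function.Injective (key s) := by
  intro i j h
  have h2 : (s i, i) = (s j, j) := toLex.injective h
  exact congrArg Prod.snd h2

lemma w_lt {s : Fin n → ℝ} {i j : Fin n} (h : key s i < key s j) : w s i < w s j := by
  have hss : Finset.univ.filter (fun l => key s l < key s i) ⊂
      Finset.univ.filter (fun l => key s l < key s j) := by
    constructor
    · intro l hl
      simp only [mem_filter, mem_univ, true_and] at hl ⊢
      exact lt_trans hl h
    · intro hsub
      have h3 : i ∈ Finset.univ.filter (fun l => key s l < key s i) := by
        apply hsub; simp [h]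
      simp at h3
  have := Finset.card_lt_card hss
  simp only [w]; omega

lemma w_le (s : Fin n → ℝ) (i : Fin n) : w s i ≤ n := by
  have h1 : Finset.univ.filter (fun l => key s l < key s i) ⊆ Finset.univ.erase i := by
    intro l hl
    simp only [mem_filter, mem_univ, true_and] at hl
    exact Finset.mem_erase.mpr ⟨fun he => absurd (he ▸ hl) (lt_irrefl _), mem_univ l⟩
  have h2 := Finset.card_le_card h1
  have h3 : (Finset.univ.erase i).card = n - 1 := by
    rw [Finset.card_erase_of_mem (mem_univ i)]; simp
  have h4 : 0 < n := i.pos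
  simp only [w]; omega

lemma phi_le {s : Fin n → ℝ} {Max : ℕ} {x : Fin n → ℕ} (hx : ∀ i, x i ≤ Max) :
    Φ s x ≤ n * (Max * n) := by
  calc Φ s x ≤ ∑ _l : Fin n, Max * n :=
        Finset.sum_le_sum (fun l _ => Nat.mul_le_mul (hx l) (w_le s l))
    _ = n * (Max * n) := by simp [mul_comm]

lemma cov_reduce {s e : Fin n → ℝ} {t : ℝ} (hne : (cov s e t).Nonempty) :
    ∃ i0 ∈ cov s e t, (∀ l ∈ cov s e t, s l ≤ s i0) ∧ cov s e t ⊆ cov s e (s i0) := by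
  obtain ⟨i0, hi0, hmax⟩ := Finset.exists_max_image (cov s e t) s hne
  refine ⟨i0, hi0, hmax, ?_⟩
  intro l hl
  have hl' := hl
  simp only [cov, mem_filter, mem_univ, true_and] at hl hi0 ⊢
  exact ⟨hmax l hl', lt_of_le_of_lt hi0.1 hl.2⟩

/-- sum manipulation for a single +1 update -/
lemma sum_update1 (A : Finset (Fin n)) (x : Fin n → ℕ) (i : Fin n) :
    ∑ l ∈ A, Function.update x i (x i + 1) l
      = (∑ l ∈ A, x l) + (if i ∈ A then 1 else 0) := by
  classical
  by_cases hi : i ∈ A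
  · rw [Finset.sum_update_of_mem hi, ← Finset.erase_eq,
      ← Finset.add_sum_erase A x hi, if_pos hi]
    omega
  · rw [Finset.sum_update_of_notMem hi, if_neg hi]
    omega

/-- sum manipulation for the transfer step -/
lemma sum_update2 (A : Finset (Fin n)) (x : Fin n → ℕ) (i j : Fin n) (hij : j ≠ i)
    (hxj : 1 ≤ x j) :
    (∑ l ∈ A, (Function.update (Function.update x j (x j - 1)) i (x i + 1)) l)
      + (if j ∈ A then 1 else 0)
    = (∑ l ∈ A, x l) + (if i ∈ A then 1 else 0) := by
  classical
  by_cases hi : i ∈ A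
  · rw [Finset.sum_update_of_mem hi, ← Finset.erase_eq]
    by_cases hj : j ∈ A
    · have hj' : j ∈ A.erase i := Finset.mem_erase.mpr ⟨hij, hj⟩
      rw [Finset.sum_update_of_mem hj', ← Finset.erase_eq,
        ← Finset.add_sum_erase A x hi, ← Finset.add_sum_erase _ x hj',
        if_pos hi, if_pos hj]
      omega
    · have hj' : j ∉ A.erase i := fun h => hj (Finset.mem_of_mem_erase h)
      rw [Finset.sum_update_of_notMem hj', ← Finset.add_sum_erase A x hi,
        if_pos hi, if_neg hj]
      omega
  · rw [Finset.sum_update_of_notMem hi]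
    by_cases hj : j ∈ A
    · rw [Finset.sum_update_of_mem hj, ← Finset.erase_eq,
        ← Finset.add_sum_erase A x hj, if_neg hi, if_pos hj]
      omega
    · rw [Finset.sum_update_of_notMem hj, if_neg hi, if_neg hj]


lemma main (s e : Fin n → ℝ) (Max k : ℕ) (hMax : 1 ≤ Max) :
    ∀ c : ℕ, ∀ x : Fin n → ℕ, (∀ i, x i ≤ Max) → (∀ t, load s e x t ≤ k * Max) →
      n * (Max * n) < Φ s x + c →
      ∃ y : Fin n → ℕ, (∀ i, y i ≤ Max) ∧ (∀ t, load s e y t ≤ k * Max) ∧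
        (∀ i, y i = 0 ∨ y i = Max) ∧ (∑ i, x i) ≤ ∑ i, y i := by
  intro c
  induction c with
  | zero =>
    intro x hx1 hx2 hb
    exact absurd hb (by have := phi_le (s := s) hx1; omega)
  | succ c ih =>
    intro x hx1 hx2 hb
    by_cases hF : (Finset.univ.filter (fun l => 0 < x l ∧ x l < Max)).Nonempty
    case neg =>
      refine ⟨x, hx1, hx2, ?_, le_refl _⟩
      intro i
      have h1 : ¬ (0 < x i ∧ x i < Max) := fun h => hF ⟨i, by simp [h]⟩
      have h2 := hx1 i
      omega
    case pos =>
    obtain ⟨i, hiF, hkmax⟩ := Finset.exists_max_image _ (key s) hF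
    simp only [mem_filter, mem_univ, true_and] at hiF
    obtain ⟨hi1, hi2⟩ := hiF
    -- at any tight time covered by i there is another fractional job
    have hwit : ∀ t : ℝ, i ∈ cov s e t → load s e x t = k * Max →
        ∃ j ∈ cov s e t, j ≠ i ∧ 0 < x j ∧ x j < Max := by
      intro t hit hload
      by_contra hcon
      push_neg at hcon
      have hdvd : Max ∣ ∑ l ∈ (cov s e t).erase i, x l := by
        apply Finset.dvd_sum
        intro l hl
        have hli : l ≠ i := (Finset.mem_erase.1 hl).1
        have hlc : l ∈ cov s e t := Finset.mem_of_mem_erase hl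
        rcases Nat.eq_zero_or_pos (x l) with h0 | h0
        · rw [h0]; exact dvd_zero _
        · have hge := hcon l hlc hli h0
          have hle := hx1 l
          have : x l = Max := le_antisymm hle hge
          rw [this]
      have hsplit : x i + ∑ l ∈ (cov s e t).erase i, x l = k * Max := by
        rw [Finset.add_sum_erase _ x hit]; exact hload
      have hxid : Max ∣ x i := by
        have h1 : x i = k * Max - ∑ l ∈ (cov s e t).erase i, x l := by omega
        rw [h1]
        exact Nat.dvd_sub ⟨k, by ring⟩ hdvd
      have := Nat.le_of_dvd hi1 hxid
      omega
    set T := Finset.univ.filter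
      (fun l => s i ≤ s l ∧ s l < e i ∧ load s e x (s l) = k * Max) with hTdef
    by_cases hT : T.Nonempty
    case neg =>
      -- CASE A : no tight start point in i's window; bump x i by one
      set x' := Function.update x i (x i + 1) with hx'def
      have hload' : ∀ t, load s e x' t
          = load s e x t + (if i ∈ cov s e t then 1 else 0) := by
        intro t; simp only [load, hx'def]; exact sum_update1 _ x i
      have hx'1 : ∀ l, x' l ≤ Max := by
        intro l
        by_cases hl : l = i
        · subst hl; simp only [hx'def, Function.update_self]; omega
        · simp only [hx'def, Function.update_of_ne hl]; exact hx1 l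
      have hx'2 : ∀ t, load s e x' t ≤ k * Max := by
        intro t
        by_cases hit : i ∈ cov s e t
        · obtain ⟨i0, hi0c, hi0max, hsub⟩ := cov_reduce ⟨i, hit⟩
          have h1 : load s e x' t ≤ load s e x' (s i0) :=
            Finset.sum_le_sum_of_subset hsub
          have hi0w : i ∈ cov s e (s i0) := hsub hit
          have hi0win : s i ≤ s i0 ∧ s i0 < e i := by
            simpa [cov] using hi0w
          have h2 := hload' (s i0)
          rw [if_pos hi0w] at h2
          have hne : load s e x (s i0) ≠ k * Max := by
            intro heq
            exact hT ⟨i0, by simp [hTdef, hi0win.1, hi0win.2, heq]⟩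
          have h3 := hx2 (s i0)
          omega
        · have h0 := hload' t
          rw [if_neg hit] at h0
          have := hx2 t
          omega
      have hsum : ∑ l, x l ≤ ∑ l, x' l := by
        have h := sum_update1 (univ : Finset (Fin n)) x i
        rw [if_pos (mem_univ i)] at h
        rw [hx'def]
        omega
      have hΦ : Φ s x < Φ s x' := by
        have hfun : ∀ l, x' l * w s l
            = Function.update (fun l => x l * w s l) i ((x i + 1) * w s i) l := by
          intro l
          by_cases hl : l = i
          · subst hl; simp [hx'def]
          · simp [hx'def, Function.update_of_ne hl]
        simp only [Φ]
        rw [Finset.sum_congr rfl (fun l _ => hfun l),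
          Finset.sum_update_of_mem (mem_univ i), ← Finset.erase_eq,
          ← Finset.add_sum_erase _ (fun l => x l * w s l) (mem_univ i)]
        have hw1 : 1 ≤ w s i := Nat.le_add_left 1 _
        have e1 : (x i + 1) * w s i = x i * w s i + w s i := by ring
        rw [e1]
        omega
      have hbound : n * (Max * n) < Φ s x' + c := by omega
      obtain ⟨y, hy1, hy2, hy3, hy4⟩ := ih x' hx'1 hx'2 hbound
      exact ⟨y, hy1, hy2, hy3, le_trans hsum hy4⟩
    case pos =>
      -- CASE B : transfer one unit from a suitable fractional job j to i
      obtain ⟨l0, hl0T, hl0min⟩ := Finset.exists_min_image T s hT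
      rw [hTdef] at hl0T
      simp only [mem_filter, mem_univ, true_and] at hl0T
      obtain ⟨hl0a, hl0b, hl0c⟩ := hl0T
      have hicov0 : i ∈ cov s e (s l0) := by simp [cov, hl0a, hl0b]
      set J := (cov s e (s l0)).filter (fun l => l ≠ i ∧ 0 < x l ∧ x l < Max) with hJdef
      have hJne : J.Nonempty := by
        obtain ⟨j, hj1, hj2, hj3, hj4⟩ := hwit (s l0) hicov0 hl0c
        exact ⟨j, by simp [hJdef, mem_filter, hj1, hj2, hj3, hj4]⟩
      obtain ⟨j, hjJ, hjmaxE⟩ := Finset.exists_max_image J e hJne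
      rw [hJdef] at hjJ
      simp only [mem_filter] at hjJ
      obtain ⟨hjcov0, hjne, hj1, hj2⟩ := hjJ
      have hjcov0' : s j ≤ s l0 ∧ s l0 < e j := by simpa [cov] using hjcov0
      set x' := Function.update (Function.update x j (x j - 1)) i (x i + 1) with hx'def
      have hload' : ∀ t, load s e x' t + (if j ∈ cov s e t then 1 else 0)
          = load s e x t + (if i ∈ cov s e t then 1 else 0) := by
        intro t; simp only [load, hx'def]; exact sum_update2 _ x i j hjne hj1
      have hx'1 : ∀ l, x' l ≤ Max := by
        intro l
        by_cases hl : l = i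
        · subst hl; simp only [hx'def, Function.update_self]; omega
        · by_cases hl2 : l = j
          · subst hl2
            simp only [hx'def, Function.update_of_ne hjne, Function.update_self]
            have := hx1 l; omega
          · simp only [hx'def, Function.update_of_ne hl, Function.update_of_ne hl2]
            exact hx1 l
      have hx'2 : ∀ t, load s e x' t ≤ k * Max := by
        intro t
        have h0 := hload' t
        by_cases hit : i ∈ cov s e t
        · by_cases hjt : j ∈ cov s e t
          · rw [if_pos hit, if_pos hjt] at h0
            have := hx2 t; omega
          · have hlt : load s e x t ≠ k * Max := by
              intro heq
              obtain ⟨i0, hi0c, hi0max, hsub⟩ := cov_reduce ⟨i, hit⟩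
              have hi0w : i ∈ cov s e (s i0) := hsub hit
              have hi0win : s i ≤ s i0 ∧ s i0 < e i := by simpa [cov] using hi0w
              have hge : k * Max ≤ load s e x (s i0) :=
                heq ▸ Finset.sum_le_sum_of_subset hsub
              have heq0 : load s e x (s i0) = k * Max := le_antisymm (hx2 _) hge
              have hi0T : i0 ∈ T := by
                rw [hTdef]; simp [hi0win.1, hi0win.2, heq0]
              have ht0le : s l0 ≤ s i0 := hl0min i0 hi0T
              have hi0t : s i0 ≤ t := by
                have := hi0c
                simp only [cov, mem_filter, mem_univ, true_and] at this
                exact this.1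
              obtain ⟨j', hj'c, hj'ne, hj'1, hj'2⟩ := hwit t hit heq
              have hj'F : j' ∈ Finset.univ.filter (fun l => 0 < x l ∧ x l < Max) := by
                simp [hj'1, hj'2]
              have hsj' : s j' ≤ s i := key_le_imp (hkmax j' hj'F)
              have hj'ct : s j' ≤ t ∧ t < e j' := by simpa [cov] using hj'c
              have hjst : s j ≤ t := le_trans hjcov0'.1 (le_trans ht0le hi0t)
              have hejt : e j ≤ t := by
                by_contra hc; push_neg at hc
                exact hjt (by simp [cov, hjst, hc])
              have hj'J : j' ∈ J := by
                rw [hJdef]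
                simp only [mem_filter, cov, mem_univ, true_and]
                exact ⟨⟨le_trans hsj' hl0a,
                  lt_of_le_of_lt (le_trans ht0le hi0t) hj'ct.2⟩, hj'ne, hj'1, hj'2⟩
              have hle' := hjmaxE j' hj'J
              have : t < e j := lt_of_lt_of_le hj'ct.2 hle'
              linarith
            rw [if_pos hit, if_neg hjt] at h0
            have := hx2 t
            omega
        · have hle : load s e x' t ≤ load s e x t := by
            apply Finset.sum_le_sum
            intro l hl
            have hli : l ≠ i := fun h => hit (h ▸ hl)
            by_cases hlj : l = j
            · subst hlj
              simp only [hx'def, Function.update_of_ne hjne, Function.update_self]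
              omega
            · simp only [hx'def, Function.update_of_ne hli, Function.update_of_ne hlj]
              exact le_rfl
          exact le_trans hle (hx2 t)
      have hsum : ∑ l, x l ≤ ∑ l, x' l := by
        have h := sum_update2 (univ : Finset (Fin n)) x i j hjne hj1
        rw [if_pos (mem_univ i), if_pos (mem_univ j)] at h
        rw [hx'def]
        omega
      have hkeyj : key s j < key s i := by
        have hjF : j ∈ Finset.univ.filter (fun l => 0 < x l ∧ x l < Max) := by
          simp [hj1, hj2]
        rcases lt_or_eq_of_le (hkmax j hjF) with h | h
        · exact h
        · exact absurd (key_inj s h) hjne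
      have hwji : w s j < w s i := w_lt hkeyj
      have hΦ : Φ s x < Φ s x' := by
        have hfun : ∀ l, x' l * w s l
            = Function.update (Function.update (fun l => x l * w s l) j
                ((x j - 1) * w s j)) i ((x i + 1) * w s i) l := by
          intro l
          by_cases hl : l = i
          · subst hl
            simp [hx'def, Function.update_self]
          · by_cases hl2 : l = j
            · subst hl2
              simp [hx'def, Function.update_of_ne hjne, Function.update_self]
            · simp [hx'def, Function.update_of_ne hl, Function.update_of_ne hl2]
        simp only [Φ]
        have hjmem : j ∈ (Finset.univ : Finset (Fin n)).erase i :=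
          Finset.mem_erase.mpr ⟨hjne, mem_univ j⟩
        rw [Finset.sum_congr rfl (fun l _ => hfun l),
          Finset.sum_update_of_mem (mem_univ i), ← Finset.erase_eq,
          Finset.sum_update_of_mem hjmem, ← Finset.erase_eq,
          ← Finset.add_sum_erase _ (fun l => x l * w s l) (mem_univ i),
          ← Finset.add_sum_erase _ (fun l => x l * w s l) hjmem]
        have e1 : (x i + 1) * w s i = x i * w s i + w s i := by ring
        have e2 : (x j - 1) * w s j = x j * w s j - w s j := by
          rw [Nat.sub_mul, one_mul]
        have e3 : w s j ≤ x j * w s j := Nat.le_mul_of_pos_left _ hj1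
        rw [e1, e2]
        omega
      have hbound : n * (Max * n) < Φ s x' + c := by omega
      obtain ⟨y, hy1, hy2, hy3, hy4⟩ := ih x' hx'1 hx'2 hbound
      exact ⟨y, hy1, hy2, hy3, le_trans hsum hy4⟩


end FBAPaux

open Finset

/-- A feasible allocation (FBAP solution): each job gets at most its maximum
requirement, and at every time the total allocation is at most `W`. -/
def IsAlloc {n : ℕ} (W : ℕ) (s e : Fin n → ℝ) (rmax : Fin n → ℕ)
    (x : Fin n → ℕ) : Prop :=
  (∀ i, x i ≤ rmax i) ∧
  ∀ t : ℝ, ∑ i ∈ Finset.univ.filter (fun i => s i ≤ t ∧ t < e i), x i ≤ W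

theorem stmt_1 {n : ℕ} (s e : Fin n → ℝ) (hse : ∀ i, s i < e i)
    (W : ℕ) (hW : 1 ≤ W) (rmax : Fin n → ℕ) (hrmax : ∀ i, rmax i ≤ W)
    (p : Fin n → ℝ) (hp : ∀ i, 1 ≤ p i)
    (Max : ℕ) (hMax1 : 1 ≤ Max) (hMaxW : Max ≤ W)
    (hup : ∀ i, p i = 1) (hur : ∀ i, rmax i = Max)
    (k : ℕ) (hk : 1 ≤ k) (hWkMax : W = k * Max)
    (x : Fin n → ℕ) (hx : IsAlloc W s e rmax x) :
    ∃ y : Fin n → ℕ, IsAlloc W s e rmax y ∧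
      (∀ i, y i = 0 ∨ y i = Max) ∧
      (∑ i, x i) ≤ ∑ i, y i := by
  have hx1 : ∀ i, x i ≤ Max := fun i => (hur i) ▸ hx.1 i
  have hx2 : ∀ t, FBAPaux.load s e x t ≤ k * Max := by
    intro t
    have := hx.2 t
    rw [hWkMax] at this
    exact this
  obtain ⟨y, hy1, hy2, hy3, hy4⟩ :=
    FBAPaux.main s e Max k hMax1 (n * (Max * n) + 1) x hx1 hx2 (by omega)
  refine ⟨y, ⟨fun i => (hur i).symm ▸ hy1 i, fun t => ?_⟩, hy3, hy4⟩
  rw [hWkMax]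
  exact hy2 t
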